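/- Let m > 1, set ω = 2m/(m-1), and let a, b, c > 0 satisfy ab ≤ c(m-1)^2/(8m(m+1)). Then the function V(x) = (a - b|x|^2)_+^{ω} on ℝ^N satisfies, at every point x with a - b|x|^2 > 0, the pointwise inequality -ΔV(x) + c·V(x)^{1/m} ≥ 0. -/

import Mathlib

set_option maxHeartbeats 1000000

open Real

theorem stmt_5 (N : ℕ) (hN : 1 ≤ N) (m a b c : ℝ) (hm : 1 < m)
    (ha : 0 < a) (hb : 0 < b) (hc : 0 < c)
    (hab : a * b ≤ c * (m - 1) ^ 2 / (8 * m * (m + 1))) :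
    ∀ x : EuclideanSpace ℝ (Fin N), 0 < a - b * ‖x‖ ^ 2 →
      -(∑ i : Fin N,
          fderiv ℝ (fun y : EuclideanSpace ℝ (Fin N) =>
              fderiv ℝ (fun z : EuclideanSpace ℝ (Fin N) =>
                  max (a - b * ‖z‖ ^ 2) 0 ^ (2 * m / (m - 1))) y
                (EuclideanSpace.single i 1)) x (EuclideanSpace.single i 1))
        + c * (max (a - b * ‖x‖ ^ 2) 0 ^ (2 * m / (m - 1))) ^ (1 / m) ≥ 0 := by
  intro x hx
  set ω : ℝ := 2 * m / (m - 1) with hω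
  have hm1 : (0:ℝ) < m - 1 := by linarith
  have hωpos : 0 < ω := by positivity
  have hω1 : 0 < ω - 1 := by
    rw [hω, lt_sub_iff_add_lt, lt_div_iff₀ hm1]; nlinarith
  set f : EuclideanSpace ℝ (Fin N) → ℝ := fun z => a - b * ‖z‖ ^ 2 with hf
  have hUopen : IsOpen {y : EuclideanSpace ℝ (Fin N) | 0 < f y} :=
    isOpen_lt continuous_const (by continuity)
  have hUx : {y : EuclideanSpace ℝ (Fin N) | 0 < f y} ∈ nhds x := hUopen.mem_nhds hx
  -- derivative of f
  have hDf : ∀ y : EuclideanSpace ℝ (Fin N),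
      HasFDerivAt f ((-(2 * b)) • (innerSL ℝ y)) y := by
    intro y
    have h1 : HasFDerivAt (fun z : EuclideanSpace ℝ (Fin N) => ‖z‖ ^ 2)
        (2 • (innerSL ℝ y)) y := (hasStrictFDerivAt_norm_sq y).hasFDerivAt
    have := (h1.const_mul b).const_sub a
    refine this.congr_fderiv ?_
    ext v
    simp only [ContinuousLinearMap.smul_apply, ContinuousLinearMap.neg_apply,
      smul_eq_mul]
    ring_nf
  -- first derivative of V on U
  have hDV : ∀ y : EuclideanSpace ℝ (Fin N), 0 < f y → HasFDerivAt
      (fun z : EuclideanSpace ℝ (Fin N) => max (a - b * ‖z‖ ^ 2) 0 ^ ω)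
      ((ω * f y ^ (ω - 1)) • ((-(2 * b)) • (innerSL ℝ y))) y := by
    intro y hy
    have h2 := (hDf y).rpow_const (p := ω) (Or.inl (ne_of_gt hy))
    apply h2.congr_of_eventuallyEq
    filter_upwards [hUopen.mem_nhds hy] with z hz
    rw [max_eq_left (le_of_lt hz)]
  -- second derivative terms
  have key : ∀ i : Fin N,
      fderiv ℝ (fun y : EuclideanSpace ℝ (Fin N) =>
          fderiv ℝ (fun z : EuclideanSpace ℝ (Fin N) =>
              max (a - b * ‖z‖ ^ 2) 0 ^ ω) y
            (EuclideanSpace.single i 1)) x (EuclideanSpace.single i 1)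
      = (-(2 * b) * ω) * (f x ^ (ω - 1) * 1
          + (x i) * ((ω - 1) * f x ^ (ω - 2) * (-(2 * b) * x i))) := by
    intro i
    have heq : (fun y : EuclideanSpace ℝ (Fin N) =>
        fderiv ℝ (fun z : EuclideanSpace ℝ (Fin N) =>
            max (a - b * ‖z‖ ^ 2) 0 ^ ω) y (EuclideanSpace.single i 1))
        =ᶠ[nhds x] (fun y => (-(2 * b) * ω) * (f y ^ (ω - 1) * y i)) := by
      filter_upwards [hUx] with y hy
      rw [(hDV y hy).fderiv]
      simp only [ContinuousLinearMap.coe_smul', Pi.smul_apply, innerSL_apply_apply,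
        smul_eq_mul]
      rw [EuclideanSpace.inner_single_right]
      simp
      ring
    rw [heq.fderiv_eq]
    have hu : HasFDerivAt (fun y : EuclideanSpace ℝ (Fin N) => f y ^ (ω - 1))
        (((ω - 1) * f x ^ (ω - 1 - 1)) • ((-(2 * b)) • (innerSL ℝ x))) x :=
      (hDf x).rpow_const (Or.inl (ne_of_gt hx))
    have hv : HasFDerivAt (fun y : EuclideanSpace ℝ (Fin N) => y i)
        (EuclideanSpace.proj i : EuclideanSpace ℝ (Fin N) →L[ℝ] ℝ) x := by
      exact (EuclideanSpace.proj (𝕜 := ℝ) i).hasFDerivAt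
    have hprod : HasFDerivAt (fun y : EuclideanSpace ℝ (Fin N) => -(2 * b) * ω * (f y ^ (ω - 1) * y i)) _ x := (hu.mul hv).const_mul (-(2 * b) * ω)
    rw [hprod.fderiv]
    simp only [ContinuousLinearMap.coe_smul', Pi.smul_apply,
      ContinuousLinearMap.add_apply, ContinuousLinearMap.smul_apply,
      innerSL_apply_apply, smul_eq_mul]
    rw [EuclideanSpace.inner_single_right]
    have hproj : (EuclideanSpace.proj i : EuclideanSpace ℝ (Fin N) →L[ℝ] ℝ)
        (EuclideanSpace.single i 1) = 1 := by
      simp [PiLp.proj_apply, EuclideanSpace.single_apply]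
    rw [hproj]
    have : ω - 1 - 1 = ω - 2 := by ring
    rw [this]
    simp
    try ring
  -- sum of squares
  have hsum : ∑ i : Fin N, x i ^ 2 = ‖x‖ ^ 2 := by
    rw [EuclideanSpace.norm_eq, Real.sq_sqrt (by positivity)]
    simp [sq_abs]
  -- rewrite the sum
  have hS : (∑ i : Fin N,
      fderiv ℝ (fun y : EuclideanSpace ℝ (Fin N) =>
          fderiv ℝ (fun z : EuclideanSpace ℝ (Fin N) =>
              max (a - b * ‖z‖ ^ 2) 0 ^ ω) y
            (EuclideanSpace.single i 1)) x (EuclideanSpace.single i 1))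
      = (-(2 * b) * ω) * ((N : ℝ) * (f x ^ (ω - 1))
          - 2 * b * (ω - 1) * f x ^ (ω - 2) * ‖x‖ ^ 2) := by
    rw [Finset.sum_congr rfl fun i _ => key i]
    have : ∀ i : Fin N, (-(2 * b) * ω) * (f x ^ (ω - 1) * 1
          + (x i) * ((ω - 1) * f x ^ (ω - 2) * (-(2 * b) * x i)))
        = (-(2 * b) * ω) * f x ^ (ω - 1)
          + ((-(2 * b) * ω) * ((ω - 1) * f x ^ (ω - 2) * (-(2 * b)))) * x i ^ 2 := by
      intro i; ring
    rw [Finset.sum_congr rfl fun i _ => this i, Finset.sum_add_distrib,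
      Finset.sum_const, ← Finset.mul_sum, hsum]
    simp only [Finset.card_univ, Fintype.card_fin, nsmul_eq_mul]
    ring
  have hmax : max (a - b * ‖x‖ ^ 2) 0 = f x := max_eq_left (le_of_lt hx)
  have hfx : (0:ℝ) < f x := hx
  have hpow : (f x ^ ω) ^ (1 / m : ℝ) = f x ^ (ω - 2) := by
    rw [← Real.rpow_mul (le_of_lt hfx)]
    congr 1
    rw [hω]
    field_simp
    ring
  have hF1 : f x ^ (ω - 1) = f x ^ (ω - 2) * f x := by
    rw [show ω - 1 = (ω - 2) + 1 by ring, Real.rpow_add hfx, Real.rpow_one]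
  have hF2 : (0:ℝ) < f x ^ (ω - 2) := Real.rpow_pos_of_pos hfx _
  -- the coefficient bound
  have haux : 4 * a * b * (ω * (ω - 1)) ≤ c := by
    have hωω : ω * (ω - 1) = 2 * m * (m + 1) / ((m - 1) ^ 2) := by
      rw [hω]; field_simp; ring
    rw [hωω]
    rw [le_div_iff₀ (by positivity)] at hab
    rw [← mul_div_assoc, div_le_iff₀ (by positivity : (0:ℝ) < (m-1)^2)]
    nlinarith [hab]
  -- conclude
  rw [hS, hmax, hpow, hF1]
  have hbS : b * ‖x‖ ^ 2 ≤ a := by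
    have : f x = a - b * ‖x‖ ^ 2 := rfl
    linarith [hfx]
  have hSnn : (0:ℝ) ≤ ‖x‖ ^ 2 := by positivity
  have h1 : 4 * b ^ 2 * (ω * (ω - 1)) * ‖x‖ ^ 2 ≤ c := by
    calc 4 * b ^ 2 * (ω * (ω - 1)) * ‖x‖ ^ 2
        = 4 * (b * ‖x‖ ^ 2) * b * (ω * (ω - 1)) := by ring
      _ ≤ 4 * a * b * (ω * (ω - 1)) := by
          apply mul_le_mul_of_nonneg_right _ (by positivity)
          nlinarith
      _ ≤ c := haux
  have expand : -(-(2 * b) * ω * ((N : ℝ) * (f x ^ (ω - 2) * f x)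
        - 2 * b * (ω - 1) * f x ^ (ω - 2) * ‖x‖ ^ 2)) + c * f x ^ (ω - 2)
      = f x ^ (ω - 2) * (2 * b * ω * (N : ℝ) * f x
          + (c - 4 * b ^ 2 * (ω * (ω - 1)) * ‖x‖ ^ 2)) := by ring
  rw [ge_iff_le, expand]
  apply mul_nonneg hF2.le
  have : (0:ℝ) ≤ 2 * b * ω * (N : ℝ) * f x := by positivity
  linarith
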